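/- arXiv:2102.08510 — 2 statements merged into one kernel-verified Lean document; each statement's English description precedes it below -/
import Mathlib

section
/- Correctness of the delegate-allocation audit assertions: if for all pairs of distinct viable candidates m, n the assertion p_m > p_n + (a_m - a_n - 1)/D holds with p the true proportions, then the reported allocation a equals the true Hamilton-method allocation a'. Equivalently (contrapositive): if the reported allocation a differs from the true Hamilton allocation a', then some pair m, n violates p_m > p_n + (a_m - a_n - 1)/D. -/
theorem hamilton_audit_assertions_correct
    {V : Type*} [Fintype V] (D : ℕ) (hD : 0 < D) (p : V → ℝ)
    (hp : ∀ c, 0 ≤ p c) (hsum : ∑ c, p c = 1)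
    (q : V → ℝ) (hq : ∀ c, q c = D * p c)
    (a' : V → ℕ)
    (ha'round : ∀ c, (a' c : ℤ) = ⌊q c⌋ ∨ (a' c : ℤ) = ⌈q c⌉)
    (ha'sum : ∑ c, a' c = D)
    (hrem : ∀ m n : V, ((a' m : ℤ) = ⌈q m⌉ ∧ q m ≠ (⌈q m⌉ : ℝ)) →
        (a' n : ℤ) = ⌊q n⌋ → q n - ⌊q n⌋ ≤ q m - ⌊q m⌋)
    (a : V → ℕ) (hasum : ∑ c, a c = D)
    (hassert : ∀ m n : V, m ≠ n →
        p m > p n + ((a m : ℝ) - (a n : ℝ) - 1) / D) :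
    a = a' := by
  by_contra hne
  have hDR : (0:ℝ) < D := by exact_mod_cast hD
  -- find m with a' m < a m
  have hm : ∃ m, a' m < a m := by
    by_contra h
    push_neg at h
    exact hne (funext fun c =>
      (Finset.sum_eq_sum_iff_of_le (fun i _ => h i)).mp
        (hasum.trans ha'sum.symm) c (Finset.mem_univ c))
  have hn : ∃ n, a n < a' n := by
    by_contra h
    push_neg at h
    exact hne (funext fun c =>
      ((Finset.sum_eq_sum_iff_of_le (fun i _ => h i)).mp
        (ha'sum.trans hasum.symm) c (Finset.mem_univ c)).symm)
  obtain ⟨m, hmlt⟩ := hm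
  obtain ⟨n, hnlt⟩ := hn
  have hmne : m ≠ n := by
    rintro rfl
    exact absurd (hmlt.trans hnlt) (lt_irrefl _)
  -- cast facts
  have ham : ((a' m : ℝ)) + 1 ≤ (a m : ℝ) := by exact_mod_cast hmlt
  have han : ((a n : ℝ)) + 1 ≤ (a' n : ℝ) := by exact_mod_cast hnlt
  -- assertion in terms of q
  have h0 : ((a m:ℝ) - a n - 1) / D < p m - p n := by
    have := hassert m n hmne
    linarith
  have h1 : ((a m:ℝ) - a n - 1) < (p m - p n) * D := (div_lt_iff₀ hDR).mp h0
  have key : q n - (a' n : ℝ) + 1 < q m - (a' m : ℝ) := by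
    have hqm := hq m
    have hqn := hq n
    nlinarith
  -- bounds on q c - a' c
  have hup : ∀ c, q c - (a' c : ℝ) < 1 := by
    intro c
    rcases ha'round c with h | h
    · have hc : ((a' c : ℤ) : ℝ) = ((⌊q c⌋ : ℤ) : ℝ) := by exact_mod_cast h
      push_cast at hc
      have := Int.lt_floor_add_one (q c)
      linarith
    · have hc : ((a' c : ℤ) : ℝ) = ((⌈q c⌉ : ℤ) : ℝ) := by exact_mod_cast h
      push_cast at hc
      have := Int.le_ceil (q c)
      linarith
  have hlow : ∀ c, (-1:ℝ) < q c - (a' c : ℝ) := by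
    intro c
    rcases ha'round c with h | h
    · have hc : ((a' c : ℤ) : ℝ) = ((⌊q c⌋ : ℤ) : ℝ) := by exact_mod_cast h
      push_cast at hc
      have := Int.floor_le (q c)
      linarith
    · have hc : ((a' c : ℤ) : ℝ) = ((⌈q c⌉ : ℤ) : ℝ) := by exact_mod_cast h
      push_cast at hc
      have := Int.ceil_lt_add_one (q c)
      linarith
  -- a' m is the floor
  have hm_floor : (a' m : ℤ) = ⌊q m⌋ := by
    rcases ha'round m with h | h
    · exact h
    · exfalso
      have hc : ((a' m : ℤ) : ℝ) = ((⌈q m⌉ : ℤ) : ℝ) := by exact_mod_cast h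
      push_cast at hc
      have h2 := Int.le_ceil (q m)
      have := hlow n
      linarith
  have hm_floorR : ((a' m : ℝ)) = ((⌊q m⌋ : ℤ) : ℝ) := by exact_mod_cast hm_floor
  -- a' n is the ceiling, strictly
  have hn_big : q n - (a' n : ℝ) < 0 := by
    have := hup m
    linarith
  have hn_ceil : (a' n : ℤ) = ⌈q n⌉ := by
    rcases ha'round n with h | h
    · exfalso
      have hc : ((a' n : ℤ) : ℝ) = ((⌊q n⌋ : ℤ) : ℝ) := by exact_mod_cast h
      push_cast at hc
      have := Int.floor_le (q n)
      linarith
    · exact h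
  have hn_ceilR : ((a' n : ℝ)) = ((⌈q n⌉ : ℤ) : ℝ) := by exact_mod_cast hn_ceil
  have hqn_ne : q n ≠ ((⌈q n⌉ : ℤ) : ℝ) := by
    intro h
    rw [← hn_ceilR] at h
    linarith
  have hrem' := hrem n m ⟨hn_ceil, hqn_ne⟩ hm_floor
  -- ceil q n = floor q n + 1
  have hfc : (⌈q n⌉ : ℤ) = ⌊q n⌋ + 1 := by
    have h1 : (⌊q n⌋ : ℝ) < (⌈q n⌉ : ℝ) := by
      have h2 := Int.floor_le (q n)
      have h3 := lt_of_le_of_ne (Int.le_ceil (q n)) hqn_ne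
      linarith
    have h1' : ⌊q n⌋ < ⌈q n⌉ := by exact_mod_cast h1
    exact le_antisymm (Int.ceil_le_floor_add_one _) h1'
  have hfcR : ((⌈q n⌉ : ℤ) : ℝ) = ((⌊q n⌋ : ℤ) : ℝ) + 1 := by exact_mod_cast hfc
  linarith [hrem', key, hm_floorR, hn_ceilR, hfcR]
end

section
/- For the NonViable assertion encoded as a majority assorter: assigning value 1/(2(1-τ)) to each valid ballot not for candidate c, 0 to each valid ballot for c, and 1/2 to invalid ballots, the assorter mean exceeds 1/2 iff the proportion of valid votes for c is strictly less than τ. -/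
theorem nonviable_assorter_mean_gt_half_iff
    (τ : ℝ) (hτ₁ : 0 < τ) (hτ₂ : τ < 1)
    (nc no ni N : ℕ) (hN : N = nc + no + ni) (hNpos : 0 < N)
    (hvalid : 0 < nc + no)
    (mean : ℝ)
    (hmean : mean = ((no : ℝ) * (1 / (2 * (1 - τ))) + (nc : ℝ) * 0
        + (ni : ℝ) * (1 / 2)) / N) :
    mean > 1 / 2 ↔ (nc : ℝ) / ((nc : ℝ) + (no : ℝ)) < τ := by
  have hNr : (0:ℝ) < N := by exact_mod_cast hNpos
  have hvr : (0:ℝ) < (nc:ℝ) + no := by exact_mod_cast hvalid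
  have h1τ : (0:ℝ) < 1 - τ := by linarith
  have hNe : (N:ℝ) = (nc:ℝ) + no + ni := by exact_mod_cast hN
  rw [hmean, gt_iff_lt, div_lt_div_iff₀ (by norm_num : (0:ℝ) < 2) hNr,
      div_lt_iff₀ hvr, hNe]
  have hinv : (1 / (2 * (1 - τ))) * (2 * (1 - τ)) = 1 := by
    field_simp
  constructor
  · intro h
    nlinarith [hinv, mul_pos h1τ hvr, mul_nonneg (Nat.cast_nonneg no) (le_of_lt (one_div_pos.mpr (by linarith : (0:ℝ) < 2*(1-τ))))]
  · intro h
    nlinarith [hinv, mul_pos h1τ hvr, mul_nonneg (Nat.cast_nonneg no) (le_of_lt (one_div_pos.mpr (by linarith : (0:ℝ) < 2*(1-τ))))]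
end
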